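/- In the symmetric group S₅, the permutations σ₁ = (3 4 5), σ₂ = (2 3 5), σ₃ = (1 5 2), σ₄ = (1 2 5), σ₅ = (2 4 3) each have cycle structure [1,1,3], satisfy σ₁·σ₂·σ₃·σ₄·σ₅ = identity, and the subgroup they generate acts transitively on {1,…,5}. Hence there exists a transitive product-one tuple in S₅ of length 5 with ramification type [[1²,3]⁵]. -/

import Mathlib

/-- Cycle structure of a permutation of `Fin d`, including fixed points as 1-cycles. -/
def fullCycleType {d : ℕ} (σ : Equiv.Perm (Fin d)) : Multiset ℕ :=
  σ.cycleType + Multiset.replicate (d - σ.cycleType.sum) 1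

/-- Product of a list of permutations, composed left-to-right
(apply the first permutation first). -/
def seqProd {d : ℕ} (l : List (Equiv.Perm (Fin d))) : Equiv.Perm (Fin d) :=
  l.foldr (fun σ acc => σ.trans acc) (Equiv.refl (Fin d))


def σ1 : Equiv.Perm (Fin 5) := c[2, 3, 4]

def σ2 : Equiv.Perm (Fin 5) := c[1, 2, 4]

def σ3 : Equiv.Perm (Fin 5) := c[0, 4, 1]

def σ4 : Equiv.Perm (Fin 5) := c[0, 1, 4]

def σ5 : Equiv.Perm (Fin 5) := c[1, 3, 2]

lemma fct_of_three (σ : Equiv.Perm (Fin 5)) (h : σ.support.card = 3) :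
    fullCycleType σ = ({1, 1, 3} : Multiset ℕ) := by
  have h3 : σ.IsThreeCycle := card_support_eq_three_iff.mp h
  unfold fullCycleType
  rw [h3.cycleType]
  decide

/-- element of closure moving 0 to x -/
def fmv : Fin 5 → Equiv.Perm (Fin 5)
  | 0 => 1
  | 1 => σ4
  | 2 => σ1 * σ4 * σ4
  | 3 => σ1 * σ1 * σ4 * σ4
  | 4 => σ4 * σ4

lemma fmv_zero : ∀ x, fmv x 0 = x := by decide

lemma fmv_mem : ∀ x, fmv x ∈ Subgroup.closure ({σ1, σ2, σ3, σ4, σ5} : Set (Equiv.Perm (Fin 5))) := by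
  have h1 : σ1 ∈ Subgroup.closure ({σ1, σ2, σ3, σ4, σ5} : Set (Equiv.Perm (Fin 5))) :=
    Subgroup.subset_closure (by simp)
  have h4 : σ4 ∈ Subgroup.closure ({σ1, σ2, σ3, σ4, σ5} : Set (Equiv.Perm (Fin 5))) :=
    Subgroup.subset_closure (by simp)
  intro x
  fin_cases x
  · exact one_mem _
  · exact h4
  · exact mul_mem (mul_mem h1 h4) h4
  · exact mul_mem (mul_mem (mul_mem h1 h1) h4) h4
  · exact mul_mem h4 h4

lemma trans_key : ∀ x y : Fin 5,
    ∃ g ∈ Subgroup.closure ({σ1, σ2, σ3, σ4, σ5} : Set (Equiv.Perm (Fin 5))), g x = y := by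
  intro x y
  refine ⟨fmv y * (fmv x)⁻¹, mul_mem (fmv_mem y) (inv_mem (fmv_mem x)), ?_⟩
  have hx : (fmv x)⁻¹ x = 0 := by
    have h : (fmv x)⁻¹ (fmv x 0) = 0 := Equiv.symm_apply_apply (fmv x) 0
    rwa [fmv_zero] at h
  rw [Equiv.Perm.mul_apply, hx, fmv_zero]

theorem stmt13 :
    (fullCycleType σ1 = ({1, 1, 3} : Multiset ℕ) ∧ fullCycleType σ2 = ({1, 1, 3} : Multiset ℕ) ∧ fullCycleType σ3 = ({1, 1, 3} : Multiset ℕ) ∧ fullCycleType σ4 = ({1, 1, 3} : Multiset ℕ) ∧ fullCycleType σ5 = ({1, 1, 3} : Multiset ℕ)) ∧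
    seqProd [σ1, σ2, σ3, σ4, σ5] = Equiv.refl (Fin 5) ∧
    (∀ x y : Fin 5, ∃ g ∈ Subgroup.closure ({σ1, σ2, σ3, σ4, σ5} : Set (Equiv.Perm (Fin 5))), g x = y) ∧
    (∃ τ : Fin 5 → Equiv.Perm (Fin 5),
      (∀ i, fullCycleType (τ i) = ({1, 1, 3} : Multiset ℕ)) ∧
      seqProd (List.ofFn τ) = Equiv.refl (Fin 5) ∧
      (∀ x y : Fin 5, ∃ g ∈ Subgroup.closure (Set.range τ), g x = y)) := by
  have hprod : seqProd [σ1, σ2, σ3, σ4, σ5] = Equiv.refl (Fin 5) := by decide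
  refine ⟨⟨fct_of_three _ (by decide), fct_of_three _ (by decide), fct_of_three _ (by decide),
    fct_of_three _ (by decide), fct_of_three _ (by decide)⟩, hprod, trans_key, ?_⟩
  refine ⟨![σ1, σ2, σ3, σ4, σ5], ?_, ?_, ?_⟩
  · intro i
    fin_cases i <;>
      exact fct_of_three _ (by decide)
  · simpa using hprod
  · have hr : Set.range ![σ1, σ2, σ3, σ4, σ5] = ({σ1, σ2, σ3, σ4, σ5} : Set (Equiv.Perm (Fin 5))) := by
      ext g
      constructor
      · rintro ⟨i, rfl⟩
        fin_cases i <;> simp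
      · intro hg
        rcases hg with h | h | h | h | h
        exacts [⟨0, h.symm⟩, ⟨1, h.symm⟩, ⟨2, h.symm⟩, ⟨3, h.symm⟩, ⟨4, h.symm⟩]
    rw [hr]
    exact trans_key
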